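/- In a finite MDP, if an advantage estimator decomposes as Â_t = Q_t - b_t where b_t depends only on (s_{0:t}, a_{0:t-1}) and Q_t satisfies E[Q_t | s_t, a_t, history up to t] = Q^{π,γ}(s_t, a_t), then E[Â_t · ∇_θ log π_θ(a_t|s_t)] = E[A^{π,γ}(s_t, a_t) · ∇_θ log π_θ(a_t|s_t)], i.e., Â_t is γ-just. -/

import Mathlib

open Finset

/-- Density of a length-`T` trajectory `ω = (s_{0:T}, a_{0:T})` under initial
distribution `ρ`, policy `pol θ` and transition kernel `P`. -/
def trajDensity {S A : Type*} (ρ : S → ℝ) (P : S → A → S → ℝ) (pol : ℝ → S → A → ℝ)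
    (θ : ℝ) (T : ℕ) (ω : (Fin (T + 1) → S) × (Fin (T + 1) → A)) : ℝ :=
  ρ (ω.1 0) * (∏ i, pol θ (ω.1 i) (ω.2 i)) *
    ∏ i : Fin T, P (ω.1 i.castSucc) (ω.2 i.castSucc) (ω.1 i.succ)

/-- Discounted state-action value function `Q^{π,γ}` with remaining horizon `k`:
`Q_k(s,a) = E[∑_{l<k} γ^l r_{t+l} | s_t = s, a_t = a]` under policy `pol θ`. -/
def Qhor {S A : Type*} [Fintype S] [Fintype A] (P : S → A → S → ℝ)
    (rew : S → A → S → ℝ) (pol : ℝ → S → A → ℝ) (θ γ : ℝ) : ℕ → S → A → ℝ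
  | 0, _, _ => 0
  | (k + 1), s, a =>
      ∑ s', P s a s' * (rew s a s' + γ * ∑ a', pol θ s' a' * Qhor P rew pol θ γ k s' a')

/-- γ-justness (Proposition 1): in a finite-horizon finite MDP, if the advantage
estimator decomposes as `Â_t = Q_t - b_t` where `b_t` depends only on
`(s_{0:t}, a_{0:t-1})` and `Q_t` has conditional expectation `Q^{π,γ}(s_t,a_t)` given
the history up to time `t`, then
`E[Â_t ∇_θ log π_θ(a_t|s_t)] = E[A^{π,γ}(s_t,a_t) ∇_θ log π_θ(a_t|s_t)]`. -/
lemma sum_fn_split {ι X : Type*} [Fintype ι] [DecidableEq ι] [Fintype X]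
    (k : ι) (F : (ι → X) → ℝ) :
    ∑ f : ι → X, F f =
      ∑ g : {i : ι // i ≠ k} → X, ∑ x : X,
        F (fun i => if h : i = k then x else g ⟨i, h⟩) := by
  rw [← Equiv.sum_comp (Equiv.funSplitAt k X).symm F, Fintype.sum_prod_type, Finset.sum_comm]
  refine Finset.sum_congr rfl fun g _ => Finset.sum_congr rfl fun x _ => ?_
  congr 1
  funext i
  by_cases h : i = k
  · subst h; simp [Equiv.funSplitAt_symm_apply]
  · simp [Equiv.funSplitAt_symm_apply, h]

def Dpart {S A : Type*} [Fintype S] [Fintype A] (ρ : S → ℝ) (P : S → A → S → ℝ)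
    (pol : ℝ → S → A → ℝ) (θ : ℝ) (T j : ℕ)
    (ω : (Fin (T + 1) → S) × (Fin (T + 1) → A)) : ℝ :=
  ρ (ω.1 0) * (∏ i ∈ univ.filter (fun i : Fin (T + 1) => (i : ℕ) ≤ j), pol θ (ω.1 i) (ω.2 i)) *
    ∏ i ∈ univ.filter (fun i : Fin T => (i : ℕ) < j),
      P (ω.1 i.castSucc) (ω.2 i.castSucc) (ω.1 i.succ)

section DpartLemmas
variable {S A : Type*} [Fintype S] [Fintype A]
  {ρ : S → ℝ} {P : S → A → S → ℝ} {pol : ℝ → S → A → ℝ} {θ : ℝ} {T : ℕ}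

lemma Dpart_top (ω : (Fin (T + 1) → S) × (Fin (T + 1) → A)) :
    Dpart ρ P pol θ T T ω = trajDensity ρ P pol θ T ω := by
  unfold Dpart trajDensity
  rw [Finset.filter_true_of_mem (fun i _ => Fin.is_le i),
    Finset.filter_true_of_mem (fun i _ => i.isLt)]

lemma Dpart_congr {j : ℕ} {ω ω' : (Fin (T + 1) → S) × (Fin (T + 1) → A)}
    (hs : ∀ i : Fin (T + 1), (i : ℕ) ≤ j → ω.1 i = ω'.1 i)
    (ha : ∀ i : Fin (T + 1), (i : ℕ) ≤ j → ω.2 i = ω'.2 i) :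
    Dpart ρ P pol θ T j ω = Dpart ρ P pol θ T j ω' := by
  unfold Dpart
  rw [hs 0 (Nat.zero_le j)]
  congr 1
  · congr 1
    refine Finset.prod_congr rfl fun i hi => ?_
    simp only [Finset.mem_filter, Finset.mem_univ, true_and] at hi
    rw [hs i hi, ha i hi]
  · refine Finset.prod_congr rfl fun i hi => ?_
    simp only [Finset.mem_filter, Finset.mem_univ, true_and] at hi
    rw [hs i.castSucc (by simp; omega), ha i.castSucc (by simp; omega),
      hs i.succ (by simp; omega)]

lemma Dpart_succ_mk {j : ℕ} (hj : j < T) (ω : (Fin (T + 1) → S) × (Fin (T + 1) → A)) :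
    Dpart ρ P pol θ T (j + 1) ω =
      Dpart ρ P pol θ T j ω * (pol θ (ω.1 ⟨j + 1, by omega⟩) (ω.2 ⟨j + 1, by omega⟩) *
        P (ω.1 ⟨j, by omega⟩) (ω.2 ⟨j, by omega⟩) (ω.1 ⟨j + 1, by omega⟩)) := by
  unfold Dpart
  have h1 : univ.filter (fun i : Fin (T + 1) => (i : ℕ) ≤ j + 1)
      = insert (⟨j + 1, by omega⟩ : Fin (T + 1))
          (univ.filter (fun i : Fin (T + 1) => (i : ℕ) ≤ j)) := by
    ext i; simp [Fin.ext_iff]; omega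
  have h2 : univ.filter (fun i : Fin T => (i : ℕ) < j + 1)
      = insert (⟨j, hj⟩ : Fin T) (univ.filter (fun i : Fin T => (i : ℕ) < j)) := by
    ext i; simp [Fin.ext_iff]; omega
  rw [h1, h2, Finset.prod_insert (by simp), Finset.prod_insert (by simp)]
  simp only [Fin.castSucc_mk, Fin.succ_mk]
  ring

lemma Dpart_succ {j : ℕ} (hj : j < T) (ω : (Fin (T + 1) → S) × (Fin (T + 1) → A))
    (k1 k0 : Fin (T + 1)) (hk1 : (k1 : ℕ) = j + 1) (hk0 : (k0 : ℕ) = j) :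
    Dpart ρ P pol θ T (j + 1) ω =
      Dpart ρ P pol θ T j ω * (pol θ (ω.1 k1) (ω.2 k1) *
        P (ω.1 k0) (ω.2 k0) (ω.1 k1)) := by
  have ek1 : (⟨j + 1, by omega⟩ : Fin (T + 1)) = k1 := Fin.ext (by simp [hk1])
  have ek0 : (⟨j, by omega⟩ : Fin (T + 1)) = k0 := Fin.ext (by simp [hk0])
  rw [Dpart_succ_mk hj ω, ek1, ek0]

end DpartLemmas

/-- Summing the score against the partial density (up to time `t`) over the action at
time `t` gives zero. -/
lemma Dpart_base_inner {S A : Type*} [Fintype S] [Fintype A]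
    [DecidableEq S] [DecidableEq A]
    (T t : ℕ) (ρ : S → ℝ) (P : S → A → S → ℝ)
    (pol : ℝ → S → A → ℝ) (θ : ℝ)
    (gl : S → A → ℝ) (hgl : ∀ s : S, ∑ b : A, pol θ s b * gl s b = 0)
    (f : (Fin (T + 1) → S) × (Fin (T + 1) → A) → ℝ)
    (hf : ∀ ω ω' : (Fin (T + 1) → S) × (Fin (T + 1) → A),
      (∀ i : Fin (T + 1), (i : ℕ) ≤ t → ω.1 i = ω'.1 i) →
      (∀ i : Fin (T + 1), (i : ℕ) < t → ω.2 i = ω'.2 i) → f ω = f ω')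
    (b₀ : A) (s : Fin (T + 1) → S) (k : Fin (T + 1)) (hkt : (k : ℕ) = t)
    (g : {i : Fin (T + 1) // i ≠ k} → A) :
    ∑ b : A, Dpart ρ P pol θ T t (s, fun i => if h : i = k then b else g ⟨i, h⟩) *
      (f (s, fun i => if h : i = k then b else g ⟨i, h⟩) *
        gl (s k) ((fun i => if h : i = k then b else g ⟨i, h⟩) k)) = 0 := by
  have hkk : ∀ b : A, (fun i : Fin (T + 1) => if h : i = k then b else g ⟨i, h⟩) k = b :=
    fun b => dif_pos rfl
  simp only [hkk]
  have haai : ∀ (b : A) (i : Fin (T + 1)), i ≠ k →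
      (if h : i = k then b else g ⟨i, h⟩) = (if h : i = k then b₀ else g ⟨i, h⟩) := by
    intro b i hik
    simp only [dif_neg hik]
  have hlt : ∀ i : Fin (T + 1), (i : ℕ) < t → i ≠ k := by
    intro i hi h; rw [h] at hi; omega
  have hmem : k ∈ univ.filter (fun i : Fin (T + 1) => (i : ℕ) ≤ t) := by simp [hkt]
  have hfact : ∀ b : A,
      Dpart ρ P pol θ T t (s, fun i => if h : i = k then b else g ⟨i, h⟩)
        = pol θ (s k) b *
          (ρ (s 0) *
            (∏ i ∈ (univ.filter (fun i : Fin (T + 1) => (i : ℕ) ≤ t)).erase k,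
              pol θ (s i) (if h : i = k then b₀ else g ⟨i, h⟩)) *
            ∏ i ∈ univ.filter (fun i : Fin T => (i : ℕ) < t),
              P (s i.castSucc)
                (if h : i.castSucc = k then b₀ else g ⟨i.castSucc, h⟩)
                (s i.succ)) := by
    intro b
    unfold Dpart
    dsimp only
    rw [← Finset.mul_prod_erase _ _ hmem]
    have hkk' : (if h : k = k then b else g ⟨k, h⟩) = b := dif_pos rfl
    rw [hkk']
    have e1 : ∏ i ∈ (univ.filter (fun i : Fin (T + 1) => (i : ℕ) ≤ t)).erase k,
        pol θ (s i) (if h : i = k then b else g ⟨i, h⟩)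
        = ∏ i ∈ (univ.filter (fun i : Fin (T + 1) => (i : ℕ) ≤ t)).erase k,
          pol θ (s i) (if h : i = k then b₀ else g ⟨i, h⟩) :=
      Finset.prod_congr rfl fun i hi => by rw [haai b i (Finset.ne_of_mem_erase hi)]
    have e2 : ∏ i ∈ univ.filter (fun i : Fin T => (i : ℕ) < t),
        P (s i.castSucc)
          (if h : i.castSucc = k then b else g ⟨i.castSucc, h⟩) (s i.succ)
        = ∏ i ∈ univ.filter (fun i : Fin T => (i : ℕ) < t),
          P (s i.castSucc)
            (if h : i.castSucc = k then b₀ else g ⟨i.castSucc, h⟩)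
            (s i.succ) := by
      refine Finset.prod_congr rfl fun i hi => ?_
      simp only [Finset.mem_filter, Finset.mem_univ, true_and] at hi
      rw [haai b i.castSucc (hlt i.castSucc (by simpa using hi))]
    rw [e1, e2]; ring
  have hfb : ∀ b : A, f (s, fun i => if h : i = k then b else g ⟨i, h⟩)
      = f (s, fun i => if h : i = k then b₀ else g ⟨i, h⟩) :=
    fun b => hf _ _ (fun i _ => rfl) (fun i hi => haai b i (hlt i hi))
  calc ∑ b : A, Dpart ρ P pol θ T t (s, fun i => if h : i = k then b else g ⟨i, h⟩) *
        (f (s, fun i => if h : i = k then b else g ⟨i, h⟩) * gl (s k) b)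
      = ((ρ (s 0) *
            (∏ i ∈ (univ.filter (fun i : Fin (T + 1) => (i : ℕ) ≤ t)).erase k,
              pol θ (s i) (if h : i = k then b₀ else g ⟨i, h⟩)) *
            ∏ i ∈ univ.filter (fun i : Fin T => (i : ℕ) < t),
              P (s i.castSucc)
                (if h : i.castSucc = k then b₀ else g ⟨i.castSucc, h⟩)
                (s i.succ)) *
          f (s, fun i => if h : i = k then b₀ else g ⟨i, h⟩)) *
        ∑ b : A, pol θ (s k) b * gl (s k) b := by
        rw [Finset.mul_sum]
        refine Finset.sum_congr rfl fun b _ => ?_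
        rw [hfact b, hfb b]
        ring
    _ = 0 := by rw [hgl (s k), mul_zero]

/-- Marginalizing out the step `j+1` of the trajectory: summing the partial density up
to `j+1` against a function of the history up to `j` equals `1/(|S||A|)` times the sum
against the partial density up to `j`. -/
lemma Dpart_marginalize {S A : Type*} [Fintype S] [Fintype A]
    [DecidableEq S] [DecidableEq A]
    (T j : ℕ) (hj : j < T) (ρ : S → ℝ)
    (P : S → A → S → ℝ) (hP1 : ∀ s a, ∑ s', P s a s' = 1)
    (pol : ℝ → S → A → ℝ) (θ : ℝ) (hpol1 : ∀ s, ∑ a, pol θ s a = 1)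
    (x₀ : S) (b₀ : A)
    (F : (Fin (T + 1) → S) × (Fin (T + 1) → A) → ℝ)
    (hFc : ∀ ω ω' : (Fin (T + 1) → S) × (Fin (T + 1) → A),
      (∀ i : Fin (T + 1), (i : ℕ) ≤ j → ω.1 i = ω'.1 i) →
      (∀ i : Fin (T + 1), (i : ℕ) ≤ j → ω.2 i = ω'.2 i) → F ω = F ω') :
    ∑ ω : (Fin (T + 1) → S) × (Fin (T + 1) → A), Dpart ρ P pol θ T j ω * F ω
      = ((Fintype.card S : ℝ) * (Fintype.card A : ℝ)) *
        ∑ ω : (Fin (T + 1) → S) × (Fin (T + 1) → A), Dpart ρ P pol θ T (j + 1) ω * F ω := by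
  have hj1 : j + 1 < T + 1 := by omega
  have hj0 : j < T + 1 := by omega
  set k : Fin (T + 1) := ⟨j + 1, hj1⟩ with hk
  set k0 : Fin (T + 1) := ⟨j, hj0⟩ with hk0
  have hkv : (k : ℕ) = j + 1 := rfl
  have hk0v : (k0 : ℕ) = j := rfl
  have hik : ∀ i : Fin (T + 1), (i : ℕ) ≤ j → i ≠ k := by
    intro i hi h; rw [h, hkv] at hi; omega
  have hk0k : k0 ≠ k := hik k0 (le_of_eq hk0v)
  have expand : ∀ D : (Fin (T + 1) → S) × (Fin (T + 1) → A) → ℝ,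
      ∑ ω : (Fin (T + 1) → S) × (Fin (T + 1) → A), D ω
        = ∑ gs : {i : Fin (T + 1) // i ≠ k} → S, ∑ ga : {i : Fin (T + 1) // i ≠ k} → A,
            ∑ x : S, ∑ b : A,
            D (fun i => if h : i = k then x else gs ⟨i, h⟩,
               fun i => if h : i = k then b else ga ⟨i, h⟩) := by
    intro D
    rw [Fintype.sum_prod_type, sum_fn_split k]
    refine Finset.sum_congr rfl fun gs _ => ?_
    rw [Finset.sum_comm, sum_fn_split k]
    exact Finset.sum_congr rfl fun ga _ => Finset.sum_comm
  have fiber : ∀ (gs : {i : Fin (T + 1) // i ≠ k} → S) (ga : {i : Fin (T + 1) // i ≠ k} → A),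
      ∑ x : S, ∑ b : A,
        Dpart ρ P pol θ T j
            (fun i => if h : i = k then x else gs ⟨i, h⟩,
             fun i => if h : i = k then b else ga ⟨i, h⟩) *
          F (fun i => if h : i = k then x else gs ⟨i, h⟩,
             fun i => if h : i = k then b else ga ⟨i, h⟩)
        = ((Fintype.card S : ℝ) * (Fintype.card A : ℝ)) *
          ∑ x : S, ∑ b : A,
            Dpart ρ P pol θ T (j + 1)
                (fun i => if h : i = k then x else gs ⟨i, h⟩,
                 fun i => if h : i = k then b else ga ⟨i, h⟩) *
              F (fun i => if h : i = k then x else gs ⟨i, h⟩,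
                 fun i => if h : i = k then b else ga ⟨i, h⟩) := by
    intro gs ga
    set ωf : S → A → (Fin (T + 1) → S) × (Fin (T + 1) → A) :=
      fun x b => (fun i => if h : i = k then x else gs ⟨i, h⟩,
                  fun i => if h : i = k then b else ga ⟨i, h⟩) with hωf
    have hsc : ∀ x b (i : Fin (T + 1)), (i : ℕ) ≤ j → (ωf x b).1 i = (ωf x₀ b₀).1 i := by
      intro x b i hi; simp only [hωf, dif_neg (hik i hi)]
    have hac : ∀ x b (i : Fin (T + 1)), (i : ℕ) ≤ j → (ωf x b).2 i = (ωf x₀ b₀).2 i := by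
      intro x b i hi; simp only [hωf, dif_neg (hik i hi)]
    have hDc : ∀ x b, Dpart ρ P pol θ T j (ωf x b) = Dpart ρ P pol θ T j (ωf x₀ b₀) :=
      fun x b => Dpart_congr (hsc x b) (hac x b)
    have hFcc : ∀ x b, F (ωf x b) = F (ωf x₀ b₀) :=
      fun x b => hFc _ _ (hsc x b) (hac x b)
    have hxk : ∀ x b, (ωf x b).1 k = x := fun x b => dif_pos rfl
    have hbk : ∀ x b, (ωf x b).2 k = b := fun x b => dif_pos rfl
    have hxk0 : ∀ x b, (ωf x b).1 k0 = gs ⟨k0, hk0k⟩ := fun x b => dif_neg hk0k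
    have hbk0 : ∀ x b, (ωf x b).2 k0 = ga ⟨k0, hk0k⟩ := fun x b => dif_neg hk0k
    set C : ℝ := Dpart ρ P pol θ T j (ωf x₀ b₀) * F (ωf x₀ b₀) with hC
    calc ∑ x : S, ∑ b : A, Dpart ρ P pol θ T j (ωf x b) * F (ωf x b)
        = ∑ _x : S, ∑ _b : A, C := by
          refine Finset.sum_congr rfl fun x _ => Finset.sum_congr rfl fun b _ => ?_
          rw [hDc x b, hFcc x b]
      _ = ((Fintype.card S : ℝ) * (Fintype.card A : ℝ)) * C := by
          simp [Finset.sum_const, Finset.card_univ, nsmul_eq_mul]; ring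
      _ = ((Fintype.card S : ℝ) * (Fintype.card A : ℝ)) *
          ∑ x : S, ∑ b : A, Dpart ρ P pol θ T (j + 1) (ωf x b) * F (ωf x b) := by
          congr 1
          calc C = C * ∑ x : S, P (gs ⟨k0, hk0k⟩) (ga ⟨k0, hk0k⟩) x := by
                rw [hP1, mul_one]
            _ = ∑ x : S, (C * P (gs ⟨k0, hk0k⟩) (ga ⟨k0, hk0k⟩) x) * ∑ b : A, pol θ x b := by
                rw [Finset.mul_sum]
                exact Finset.sum_congr rfl fun x _ => by rw [hpol1 x, mul_one]
            _ = ∑ x : S, ∑ b : A, Dpart ρ P pol θ T (j + 1) (ωf x b) * F (ωf x b) := by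
                refine Finset.sum_congr rfl fun x _ => ?_
                rw [Finset.mul_sum]
                refine Finset.sum_congr rfl fun b _ => ?_
                rw [Dpart_succ hj (ωf x b) k k0 hkv hk0v,
                  hxk x b, hbk x b, hxk0 x b, hbk0 x b, hDc x b, hFcc x b]
                ring
  calc ∑ ω : (Fin (T + 1) → S) × (Fin (T + 1) → A), Dpart ρ P pol θ T j ω * F ω
      = ∑ gs : {i : Fin (T + 1) // i ≠ k} → S, ∑ ga : {i : Fin (T + 1) // i ≠ k} → A,
          ∑ x : S, ∑ b : A,
          Dpart ρ P pol θ T j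
              (fun i => if h : i = k then x else gs ⟨i, h⟩,
               fun i => if h : i = k then b else ga ⟨i, h⟩) *
            F (fun i => if h : i = k then x else gs ⟨i, h⟩,
               fun i => if h : i = k then b else ga ⟨i, h⟩) :=
        expand _
    _ = ∑ gs : {i : Fin (T + 1) // i ≠ k} → S, ∑ ga : {i : Fin (T + 1) // i ≠ k} → A,
          ((Fintype.card S : ℝ) * (Fintype.card A : ℝ)) *
          ∑ x : S, ∑ b : A,
          Dpart ρ P pol θ T (j + 1)
              (fun i => if h : i = k then x else gs ⟨i, h⟩,
               fun i => if h : i = k then b else ga ⟨i, h⟩) *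
            F (fun i => if h : i = k then x else gs ⟨i, h⟩,
               fun i => if h : i = k then b else ga ⟨i, h⟩) :=
        Finset.sum_congr rfl fun gs _ => Finset.sum_congr rfl fun ga _ => fiber gs ga
    _ = ((Fintype.card S : ℝ) * (Fintype.card A : ℝ)) *
        ∑ gs : {i : Fin (T + 1) // i ≠ k} → S, ∑ ga : {i : Fin (T + 1) // i ≠ k} → A,
          ∑ x : S, ∑ b : A,
          Dpart ρ P pol θ T (j + 1)
              (fun i => if h : i = k then x else gs ⟨i, h⟩,
               fun i => if h : i = k then b else ga ⟨i, h⟩) *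
            F (fun i => if h : i = k then x else gs ⟨i, h⟩,
               fun i => if h : i = k then b else ga ⟨i, h⟩) := by
        rw [Finset.mul_sum]
        exact Finset.sum_congr rfl fun gs _ => (Finset.mul_sum _ _ _).symm
    _ = ((Fintype.card S : ℝ) * (Fintype.card A : ℝ)) *
        ∑ ω : (Fin (T + 1) → S) × (Fin (T + 1) → A), Dpart ρ P pol θ T (j + 1) ω * F ω :=
        congrArg (fun z => ((Fintype.card S : ℝ) * (Fintype.card A : ℝ)) * z)
          (expand (fun ω => Dpart ρ P pol θ T (j + 1) ω * F ω)).symm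

/-- Expectation of (history-measurable function) × (score at time `t`) vanishes. -/
lemma sum_density_hist_zero {S A : Type*} [Fintype S] [Fintype A]
    [DecidableEq S] [DecidableEq A]
    (T t : ℕ) (ht : t ≤ T) (ρ : S → ℝ)
    (P : S → A → S → ℝ) (hP1 : ∀ s a, ∑ s', P s a s' = 1)
    (pol : ℝ → S → A → ℝ) (θ : ℝ) (hpol1 : ∀ s, ∑ a, pol θ s a = 1)
    (gl : S → A → ℝ) (hgl : ∀ s : S, ∑ b : A, pol θ s b * gl s b = 0)
    (f : (Fin (T + 1) → S) × (Fin (T + 1) → A) → ℝ)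
    (hf : ∀ ω ω' : (Fin (T + 1) → S) × (Fin (T + 1) → A),
      (∀ i : Fin (T + 1), (i : ℕ) ≤ t → ω.1 i = ω'.1 i) →
      (∀ i : Fin (T + 1), (i : ℕ) < t → ω.2 i = ω'.2 i) → f ω = f ω') :
    ∑ ω : (Fin (T + 1) → S) × (Fin (T + 1) → A),
      trajDensity ρ P pol θ T ω *
        (f ω * gl (ω.1 ⟨t, Nat.lt_succ_of_le ht⟩) (ω.2 ⟨t, Nat.lt_succ_of_le ht⟩)) = 0 := by
  rcases isEmpty_or_nonempty S with hS | hS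
  · exact Finset.sum_eq_zero fun ω _ => (hS.false (ω.1 0)).elim
  rcases isEmpty_or_nonempty A with hA | hA
  · exact Finset.sum_eq_zero fun ω _ => (hA.false (ω.2 0)).elim
  obtain ⟨x₀⟩ := id hS
  obtain ⟨b₀⟩ := id hA
  have htt : t < T + 1 := by omega
  have hN : ((Fintype.card S : ℝ) * (Fintype.card A : ℝ)) ≠ 0 := by
    have h1 : 0 < Fintype.card S := @Fintype.card_pos _ _ hS
    have h2 : 0 < Fintype.card A := @Fintype.card_pos _ _ hA
    positivity
  have key : ∀ j, t ≤ j → j ≤ T →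
      ∑ ω : (Fin (T + 1) → S) × (Fin (T + 1) → A),
        Dpart ρ P pol θ T j ω * (f ω * gl (ω.1 ⟨t, htt⟩) (ω.2 ⟨t, htt⟩)) = 0 := by
    intro j hj
    induction j, hj using Nat.le_induction with
    | base =>
      intro _
      rw [Fintype.sum_prod_type]
      refine Finset.sum_eq_zero fun s _ => ?_
      rw [sum_fn_split (⟨t, htt⟩ : Fin (T + 1))]
      refine Finset.sum_eq_zero fun g _ => ?_
      exact Dpart_base_inner T t ρ P pol θ gl hgl f hf b₀ s ⟨t, htt⟩ rfl g
    | succ j hjt IH =>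
      intro h1T
      have h0 := IH (by omega)
      have hc : ∀ ω ω' : (Fin (T + 1) → S) × (Fin (T + 1) → A),
          (∀ i : Fin (T + 1), (i : ℕ) ≤ j → ω.1 i = ω'.1 i) →
          (∀ i : Fin (T + 1), (i : ℕ) ≤ j → ω.2 i = ω'.2 i) →
          f ω * gl (ω.1 ⟨t, htt⟩) (ω.2 ⟨t, htt⟩)
            = f ω' * gl (ω'.1 ⟨t, htt⟩) (ω'.2 ⟨t, htt⟩) := by
        intro ω ω' hs ha
        rw [hf ω ω' (fun i hi => hs i (le_trans hi hjt))
            (fun i hi => ha i (le_trans (le_of_lt hi) hjt)),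
          hs ⟨t, htt⟩ hjt, ha ⟨t, htt⟩ hjt]
      have h2 := (Dpart_marginalize T j (by omega) ρ P hP1 pol θ hpol1 x₀ b₀
        (fun ω => f ω * gl (ω.1 ⟨t, htt⟩) (ω.2 ⟨t, htt⟩)) hc).symm.trans h0
      exact (mul_eq_zero.mp h2).resolve_left hN
  calc ∑ ω : (Fin (T + 1) → S) × (Fin (T + 1) → A),
        trajDensity ρ P pol θ T ω * (f ω * gl (ω.1 ⟨t, htt⟩) (ω.2 ⟨t, htt⟩))
      = ∑ ω : (Fin (T + 1) → S) × (Fin (T + 1) → A),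
        Dpart ρ P pol θ T T ω * (f ω * gl (ω.1 ⟨t, htt⟩) (ω.2 ⟨t, htt⟩)) :=
        Finset.sum_congr rfl fun ω _ => by rw [Dpart_top]
    _ = 0 := key T ht le_rfl

lemma score_zero {S A : Type*} [Fintype A] (pol : ℝ → S → A → ℝ)
    (hpol : ∀ θ' s a, 0 < pol θ' s a) (hpol1 : ∀ θ' s, ∑ a, pol θ' s a = 1)
    (hdiff : ∀ s a, Differentiable ℝ fun θ' => pol θ' s a) (θ : ℝ) (s : S) :
    ∑ b : A, pol θ s b * deriv (fun θ' => Real.log (pol θ' s b)) θ = 0 := by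
  have h1 : ∀ b : A, pol θ s b * deriv (fun θ' => Real.log (pol θ' s b)) θ
      = deriv (fun θ' => pol θ' s b) θ := by
    intro b
    rw [deriv.log (hdiff s b θ) (ne_of_gt (hpol θ s b)), mul_comm,
      div_mul_cancel₀ _ (ne_of_gt (hpol θ s b))]
  simp only [h1]
  rw [← deriv_fun_sum (fun b _ => hdiff s b θ)]
  have h2 : (fun θ' => ∑ b : A, pol θ' s b) = fun _ => (1 : ℝ) :=
    funext fun θ' => hpol1 θ' s
  rw [h2, deriv_const]

/-- Part 1: replacing `Q_t` by its conditional expectation `Q^{π,γ}(s_t,a_t)`. -/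
lemma sum_Qt_eq {S A : Type*} [Fintype S] [Fintype A] [DecidableEq S] [DecidableEq A]
    (T t : ℕ) (ht : t ≤ T) (ρ : S → ℝ) (P : S → A → S → ℝ)
    (pol : ℝ → S → A → ℝ) (θ : ℝ) (rew : S → A → S → ℝ) (γ : ℝ)
    (Qt : (Fin (T + 1) → S) × (Fin (T + 1) → A) → ℝ)
    (hQ : ∀ h : (Fin (T + 1) → S) × (Fin (T + 1) → A),
      ∑ ω ∈ univ.filter (fun ω : (Fin (T + 1) → S) × (Fin (T + 1) → A) =>
          (∀ i : Fin (T + 1), (i : ℕ) ≤ t → ω.1 i = h.1 i) ∧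
          (∀ i : Fin (T + 1), (i : ℕ) ≤ t → ω.2 i = h.2 i)),
          trajDensity ρ P pol θ T ω * Qt ω =
      (∑ ω ∈ univ.filter (fun ω : (Fin (T + 1) → S) × (Fin (T + 1) → A) =>
          (∀ i : Fin (T + 1), (i : ℕ) ≤ t → ω.1 i = h.1 i) ∧
          (∀ i : Fin (T + 1), (i : ℕ) ≤ t → ω.2 i = h.2 i)),
          trajDensity ρ P pol θ T ω) *
        Qhor P rew pol θ γ (T - t) (h.1 ⟨t, Nat.lt_succ_of_le ht⟩) (h.2 ⟨t, Nat.lt_succ_of_le ht⟩))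
    (gl : S → A → ℝ) :
    ∑ ω : (Fin (T + 1) → S) × (Fin (T + 1) → A),
        trajDensity ρ P pol θ T ω * (Qt ω * gl (ω.1 ⟨t, Nat.lt_succ_of_le ht⟩) (ω.2 ⟨t, Nat.lt_succ_of_le ht⟩))
      = ∑ ω : (Fin (T + 1) → S) × (Fin (T + 1) → A),
        trajDensity ρ P pol θ T ω *
          (Qhor P rew pol θ γ (T - t) (ω.1 ⟨t, Nat.lt_succ_of_le ht⟩) (ω.2 ⟨t, Nat.lt_succ_of_le ht⟩) *
            gl (ω.1 ⟨t, Nat.lt_succ_of_le ht⟩) (ω.2 ⟨t, Nat.lt_succ_of_le ht⟩)) := by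
  have htt : t < T + 1 := by omega
  set c : ((Fin (T + 1) → S) × (Fin (T + 1) → A)) → ((Fin (T + 1) → S) × (Fin (T + 1) → A)) :=
    fun ω => (fun i => if (i : ℕ) ≤ t then ω.1 i else ω.1 ⟨t, htt⟩,
              fun i => if (i : ℕ) ≤ t then ω.2 i else ω.2 ⟨t, htt⟩) with hcdef
  rw [← Finset.sum_fiberwise univ c
      (fun ω => trajDensity ρ P pol θ T ω * (Qt ω * gl (ω.1 ⟨t, htt⟩) (ω.2 ⟨t, htt⟩))),
    ← Finset.sum_fiberwise univ c
      (fun ω => trajDensity ρ P pol θ T ω *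
        (Qhor P rew pol θ γ (T - t) (ω.1 ⟨t, htt⟩) (ω.2 ⟨t, htt⟩) *
          gl (ω.1 ⟨t, htt⟩) (ω.2 ⟨t, htt⟩)))]
  refine Finset.sum_congr rfl fun h _ => ?_
  have hfwd : ∀ ω : (Fin (T + 1) → S) × (Fin (T + 1) → A), c ω = h →
      (∀ i : Fin (T + 1), (i : ℕ) ≤ t → ω.1 i = h.1 i) ∧
      (∀ i : Fin (T + 1), (i : ℕ) ≤ t → ω.2 i = h.2 i) := by
    intro ω hcw
    constructor
    · intro i hi; rw [← hcw]; simp [hcdef, hi]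
    · intro i hi; rw [← hcw]; simp [hcdef, hi]
  rcases Finset.eq_empty_or_nonempty
      (univ.filter (fun ω : (Fin (T + 1) → S) × (Fin (T + 1) → A) => c ω = h)) with he | hne
  · rw [he]; simp
  obtain ⟨ω₀, hω₀⟩ := hne
  have hch : c ω₀ = h := (Finset.mem_filter.mp hω₀).2
  have h0 := hfwd ω₀ hch
  have hfib : univ.filter (fun ω : (Fin (T + 1) → S) × (Fin (T + 1) → A) => c ω = h)
      = univ.filter (fun ω : (Fin (T + 1) → S) × (Fin (T + 1) → A) =>
          (∀ i : Fin (T + 1), (i : ℕ) ≤ t → ω.1 i = h.1 i) ∧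
          (∀ i : Fin (T + 1), (i : ℕ) ≤ t → ω.2 i = h.2 i)) := by
    ext ω
    simp only [Finset.mem_filter, Finset.mem_univ, true_and]
    constructor
    · exact hfwd ω
    · rintro ⟨h1, h2⟩
      rw [← hch]
      have e1 : (c ω).1 = (c ω₀).1 := by
        funext i
        by_cases hi : (i : ℕ) ≤ t
        · simp only [hcdef, if_pos hi]
          rw [h1 i hi, h0.1 i hi]
        · simp only [hcdef, if_neg hi]
          rw [h1 ⟨t, htt⟩ (le_refl t), h0.1 ⟨t, htt⟩ (le_refl t)]
      have e2 : (c ω).2 = (c ω₀).2 := by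
        funext i
        by_cases hi : (i : ℕ) ≤ t
        · simp only [hcdef, if_pos hi]
          rw [h2 i hi, h0.2 i hi]
        · simp only [hcdef, if_neg hi]
          rw [h2 ⟨t, htt⟩ (le_refl t), h0.2 ⟨t, htt⟩ (le_refl t)]
      exact Prod.ext e1 e2
  rw [hfib]
  have hmem : ∀ ω ∈ univ.filter (fun ω : (Fin (T + 1) → S) × (Fin (T + 1) → A) =>
      (∀ i : Fin (T + 1), (i : ℕ) ≤ t → ω.1 i = h.1 i) ∧
      (∀ i : Fin (T + 1), (i : ℕ) ≤ t → ω.2 i = h.2 i)),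
      ω.1 ⟨t, htt⟩ = h.1 ⟨t, htt⟩ ∧ ω.2 ⟨t, htt⟩ = h.2 ⟨t, htt⟩ := by
    intro ω hw
    have := (Finset.mem_filter.mp hw).2
    exact ⟨this.1 ⟨t, htt⟩ (le_refl t), this.2 ⟨t, htt⟩ (le_refl t)⟩
  calc ∑ ω ∈ univ.filter (fun ω : (Fin (T + 1) → S) × (Fin (T + 1) → A) =>
          (∀ i : Fin (T + 1), (i : ℕ) ≤ t → ω.1 i = h.1 i) ∧
          (∀ i : Fin (T + 1), (i : ℕ) ≤ t → ω.2 i = h.2 i)),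
        trajDensity ρ P pol θ T ω * (Qt ω * gl (ω.1 ⟨t, htt⟩) (ω.2 ⟨t, htt⟩))
      = (∑ ω ∈ univ.filter (fun ω : (Fin (T + 1) → S) × (Fin (T + 1) → A) =>
          (∀ i : Fin (T + 1), (i : ℕ) ≤ t → ω.1 i = h.1 i) ∧
          (∀ i : Fin (T + 1), (i : ℕ) ≤ t → ω.2 i = h.2 i)),
          trajDensity ρ P pol θ T ω * Qt ω) * gl (h.1 ⟨t, htt⟩) (h.2 ⟨t, htt⟩) := by
        rw [Finset.sum_mul]
        refine Finset.sum_congr rfl fun ω hw => ?_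
        rw [(hmem ω hw).1, (hmem ω hw).2]
        ring
    _ = ((∑ ω ∈ univ.filter (fun ω : (Fin (T + 1) → S) × (Fin (T + 1) → A) =>
          (∀ i : Fin (T + 1), (i : ℕ) ≤ t → ω.1 i = h.1 i) ∧
          (∀ i : Fin (T + 1), (i : ℕ) ≤ t → ω.2 i = h.2 i)),
          trajDensity ρ P pol θ T ω) *
        Qhor P rew pol θ γ (T - t) (h.1 ⟨t, htt⟩) (h.2 ⟨t, htt⟩)) *
          gl (h.1 ⟨t, htt⟩) (h.2 ⟨t, htt⟩) := by
        exact congrArg (fun z => z * gl (h.1 ⟨t, htt⟩) (h.2 ⟨t, htt⟩)) (hQ h)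
    _ = ∑ ω ∈ univ.filter (fun ω : (Fin (T + 1) → S) × (Fin (T + 1) → A) =>
          (∀ i : Fin (T + 1), (i : ℕ) ≤ t → ω.1 i = h.1 i) ∧
          (∀ i : Fin (T + 1), (i : ℕ) ≤ t → ω.2 i = h.2 i)),
        trajDensity ρ P pol θ T ω *
          (Qhor P rew pol θ γ (T - t) (ω.1 ⟨t, htt⟩) (ω.2 ⟨t, htt⟩) *
            gl (ω.1 ⟨t, htt⟩) (ω.2 ⟨t, htt⟩)) := by
        rw [Finset.sum_mul, Finset.sum_mul]
        refine Finset.sum_congr rfl fun ω hw => ?_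
        rw [(hmem ω hw).1, (hmem ω hw).2]
        ring

theorem gamma_just_advantage_estimator
    {S A : Type*} [Fintype S] [Fintype A] [DecidableEq S] [DecidableEq A]
    (T t : ℕ) (ht : t ≤ T)
    (ρ : S → ℝ) (hρnn : ∀ s, 0 ≤ ρ s) (hρ1 : ∑ s, ρ s = 1)
    (P : S → A → S → ℝ) (hPnn : ∀ s a s', 0 ≤ P s a s') (hP1 : ∀ s a, ∑ s', P s a s' = 1)
    (pol : ℝ → S → A → ℝ) (hpol : ∀ θ' s a, 0 < pol θ' s a)
    (hpol1 : ∀ θ' s, ∑ a, pol θ' s a = 1)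
    (hdiff : ∀ s a, Differentiable ℝ fun θ' => pol θ' s a)
    (rew : S → A → S → ℝ) (γ : ℝ) (hγ0 : 0 ≤ γ) (hγ1 : γ < 1) (θ : ℝ)
    (Qt bt : (Fin (T + 1) → S) × (Fin (T + 1) → A) → ℝ)
    -- `b_t` depends only on `(s_{0:t}, a_{0:t-1})`:
    (hb : ∀ ω ω' : (Fin (T + 1) → S) × (Fin (T + 1) → A),
      (∀ i : Fin (T + 1), (i : ℕ) ≤ t → ω.1 i = ω'.1 i) →
      (∀ i : Fin (T + 1), (i : ℕ) < t → ω.2 i = ω'.2 i) → bt ω = bt ω')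
    -- `E[Q_t | s_t, a_t, history up to t] = Q^{π,γ}(s_t, a_t)`:
    (hQ : ∀ h : (Fin (T + 1) → S) × (Fin (T + 1) → A),
      ∑ ω ∈ univ.filter (fun ω : (Fin (T + 1) → S) × (Fin (T + 1) → A) =>
          (∀ i : Fin (T + 1), (i : ℕ) ≤ t → ω.1 i = h.1 i) ∧
          (∀ i : Fin (T + 1), (i : ℕ) ≤ t → ω.2 i = h.2 i)),
          trajDensity ρ P pol θ T ω * Qt ω =
      (∑ ω ∈ univ.filter (fun ω : (Fin (T + 1) → S) × (Fin (T + 1) → A) =>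
          (∀ i : Fin (T + 1), (i : ℕ) ≤ t → ω.1 i = h.1 i) ∧
          (∀ i : Fin (T + 1), (i : ℕ) ≤ t → ω.2 i = h.2 i)),
          trajDensity ρ P pol θ T ω) *
        Qhor P rew pol θ γ (T - t) (h.1 ⟨t, by omega⟩) (h.2 ⟨t, by omega⟩)) :
    ∑ ω : (Fin (T + 1) → S) × (Fin (T + 1) → A),
        trajDensity ρ P pol θ T ω * ((Qt ω - bt ω) *
          deriv (fun θ' => Real.log (pol θ' (ω.1 ⟨t, by omega⟩) (ω.2 ⟨t, by omega⟩))) θ) =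
      ∑ ω : (Fin (T + 1) → S) × (Fin (T + 1) → A),
        trajDensity ρ P pol θ T ω *
          ((Qhor P rew pol θ γ (T - t) (ω.1 ⟨t, by omega⟩) (ω.2 ⟨t, by omega⟩) -
            ∑ a', pol θ (ω.1 ⟨t, by omega⟩) a' *
              Qhor P rew pol θ γ (T - t) (ω.1 ⟨t, by omega⟩) a') *
          deriv (fun θ' => Real.log (pol θ' (ω.1 ⟨t, by omega⟩) (ω.2 ⟨t, by omega⟩))) θ) := by
  have htt : t < T + 1 := by omega
  -- the three key identities
  have hzb : ∑ ω : (Fin (T + 1) → S) × (Fin (T + 1) → A),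
      trajDensity ρ P pol θ T ω * (bt ω *
        deriv (fun θ' => Real.log (pol θ' (ω.1 ⟨t, htt⟩) (ω.2 ⟨t, htt⟩))) θ) = 0 :=
    sum_density_hist_zero T t ht ρ P hP1 pol θ (hpol1 θ)
      (fun s a => deriv (fun θ' => Real.log (pol θ' s a)) θ)
      (score_zero pol hpol hpol1 hdiff θ) bt hb
  have hzV : ∑ ω : (Fin (T + 1) → S) × (Fin (T + 1) → A),
      trajDensity ρ P pol θ T ω *
        ((∑ a', pol θ (ω.1 ⟨t, htt⟩) a' *
            Qhor P rew pol θ γ (T - t) (ω.1 ⟨t, htt⟩) a') *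
          deriv (fun θ' => Real.log (pol θ' (ω.1 ⟨t, htt⟩) (ω.2 ⟨t, htt⟩))) θ) = 0 :=
    sum_density_hist_zero T t ht ρ P hP1 pol θ (hpol1 θ)
      (fun s a => deriv (fun θ' => Real.log (pol θ' s a)) θ)
      (score_zero pol hpol hpol1 hdiff θ)
      (fun ω => ∑ a', pol θ (ω.1 ⟨t, htt⟩) a' *
        Qhor P rew pol θ γ (T - t) (ω.1 ⟨t, htt⟩) a')
      (fun ω ω' hs _ => by simp only [hs ⟨t, htt⟩ (le_refl t)])
  have hpart : ∑ ω : (Fin (T + 1) → S) × (Fin (T + 1) → A),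
      trajDensity ρ P pol θ T ω * (Qt ω *
        deriv (fun θ' => Real.log (pol θ' (ω.1 ⟨t, htt⟩) (ω.2 ⟨t, htt⟩))) θ)
      = ∑ ω : (Fin (T + 1) → S) × (Fin (T + 1) → A),
        trajDensity ρ P pol θ T ω *
          (Qhor P rew pol θ γ (T - t) (ω.1 ⟨t, htt⟩) (ω.2 ⟨t, htt⟩) *
            deriv (fun θ' => Real.log (pol θ' (ω.1 ⟨t, htt⟩) (ω.2 ⟨t, htt⟩))) θ) :=
    sum_Qt_eq T t ht ρ P pol θ rew γ Qt hQ
      (fun s a => deriv (fun θ' => Real.log (pol θ' s a)) θ)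
  have hbV : ∑ ω : (Fin (T + 1) → S) × (Fin (T + 1) → A),
      trajDensity ρ P pol θ T ω * (bt ω *
        deriv (fun θ' => Real.log (pol θ' (ω.1 ⟨t, htt⟩) (ω.2 ⟨t, htt⟩))) θ)
      = ∑ ω : (Fin (T + 1) → S) × (Fin (T + 1) → A),
        trajDensity ρ P pol θ T ω *
          ((∑ a', pol θ (ω.1 ⟨t, htt⟩) a' *
              Qhor P rew pol θ γ (T - t) (ω.1 ⟨t, htt⟩) a') *
            deriv (fun θ' => Real.log (pol θ' (ω.1 ⟨t, htt⟩) (ω.2 ⟨t, htt⟩))) θ) :=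
    hzb.trans hzV.symm
  calc ∑ ω : (Fin (T + 1) → S) × (Fin (T + 1) → A),
        trajDensity ρ P pol θ T ω * ((Qt ω - bt ω) *
          deriv (fun θ' => Real.log (pol θ' (ω.1 ⟨t, htt⟩) (ω.2 ⟨t, htt⟩))) θ)
      = (∑ ω : (Fin (T + 1) → S) × (Fin (T + 1) → A),
          trajDensity ρ P pol θ T ω * (Qt ω *
            deriv (fun θ' => Real.log (pol θ' (ω.1 ⟨t, htt⟩) (ω.2 ⟨t, htt⟩))) θ))
        - ∑ ω : (Fin (T + 1) → S) × (Fin (T + 1) → A),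
          trajDensity ρ P pol θ T ω * (bt ω *
            deriv (fun θ' => Real.log (pol θ' (ω.1 ⟨t, htt⟩) (ω.2 ⟨t, htt⟩))) θ) := by
        rw [← Finset.sum_sub_distrib]
        exact Finset.sum_congr rfl fun ω _ => by ring
    _ = (∑ ω : (Fin (T + 1) → S) × (Fin (T + 1) → A),
          trajDensity ρ P pol θ T ω *
            (Qhor P rew pol θ γ (T - t) (ω.1 ⟨t, htt⟩) (ω.2 ⟨t, htt⟩) *
              deriv (fun θ' => Real.log (pol θ' (ω.1 ⟨t, htt⟩) (ω.2 ⟨t, htt⟩))) θ))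
        - ∑ ω : (Fin (T + 1) → S) × (Fin (T + 1) → A),
          trajDensity ρ P pol θ T ω *
            ((∑ a', pol θ (ω.1 ⟨t, htt⟩) a' *
                Qhor P rew pol θ γ (T - t) (ω.1 ⟨t, htt⟩) a') *
              deriv (fun θ' => Real.log (pol θ' (ω.1 ⟨t, htt⟩) (ω.2 ⟨t, htt⟩))) θ) :=
        congrArg₂ (fun u v : ℝ => u - v) hpart hbV
    _ = ∑ ω : (Fin (T + 1) → S) × (Fin (T + 1) → A),
        trajDensity ρ P pol θ T ω *
          ((Qhor P rew pol θ γ (T - t) (ω.1 ⟨t, htt⟩) (ω.2 ⟨t, htt⟩) -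
            ∑ a', pol θ (ω.1 ⟨t, htt⟩) a' *
              Qhor P rew pol θ γ (T - t) (ω.1 ⟨t, htt⟩) a') *
          deriv (fun θ' => Real.log (pol θ' (ω.1 ⟨t, htt⟩) (ω.2 ⟨t, htt⟩))) θ) := by
        rw [← Finset.sum_sub_distrib]
        exact Finset.sum_congr rfl fun ω _ => by ring
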